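/- Suppose σ_1, σ_2 ∈ S_d are single cycles whose supports are not disjoint, and let σ be any cycle occurring in the decomposition of σ_1 σ_2 into disjoint cycles. Then there exists an element of {1, …, d} lying in the support of σ, in the support of σ_1, and in the support of σ_2. -/

import Mathlib

open Equiv Equiv.Perm

private lemma aux_common_support
    {d : ℕ} (σ1 σ2 σ : Equiv.Perm (Fin d)) (h1 : σ1.IsCycle)
    (hσ : σ ∈ (σ1 * σ2).cycleFactorsFinset)
    (a : Fin d) (ha1 : a ∈ σ1.support) (ha2 : a ∈ σ2.support)
    (x : Fin d) (hx : x ∈ σ.support) (hxA : x ∈ σ1.support) :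
    ∃ y : Fin d, y ∈ σ.support ∧ y ∈ σ1.support ∧ y ∈ σ2.support := by
  rw [Equiv.Perm.mem_cycleFactorsFinset_iff] at hσ
  obtain ⟨hσc, hσeq⟩ := hσ
  have hexists : ∃ k : ℕ, (σ1 ^ k) x ∈ σ2.support := by
    obtain ⟨k, hk⟩ := h1.exists_pow_eq (Equiv.Perm.mem_support.mp hxA)
      (Equiv.Perm.mem_support.mp ha1)
    exact ⟨k, hk ▸ ha2⟩
  classical
  set k := Nat.find hexists with hkdef
  have hk2 : (σ1 ^ k) x ∈ σ2.support := Nat.find_spec hexists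
  have hkmin : ∀ j < k, (σ1 ^ j) x ∉ σ2.support := fun j hj => Nat.find_min hexists hj
  have key : ∀ j, j ≤ k → ((σ1 * σ2) ^ j) x = (σ1 ^ j) x ∧ ((σ1 * σ2) ^ j) x ∈ σ.support := by
    intro j hj
    induction j with
    | zero => simpa using hx
    | succ n ih =>
      obtain ⟨heq, hmem⟩ := ih (Nat.le_of_succ_le hj)
      have hn2 : (σ1 ^ n) x ∉ σ2.support := hkmin n (Nat.lt_of_succ_le hj)
      have hfix : σ2 ((σ1 ^ n) x) = (σ1 ^ n) x := by
        by_contra h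
        exact hn2 (Equiv.Perm.mem_support.mpr h)
      have h1eq : ((σ1 * σ2) ^ (n + 1)) x = (σ1 ^ (n + 1)) x := by
        rw [pow_succ', Equiv.Perm.mul_apply, heq, Equiv.Perm.mul_apply, hfix, pow_succ',
          Equiv.Perm.mul_apply]
      refine ⟨h1eq, ?_⟩
      have h2eq : ((σ1 * σ2) ^ (n + 1)) x = (σ1 * σ2) (((σ1 * σ2) ^ n) x) := by
        rw [pow_succ', Equiv.Perm.mul_apply]
      rw [h2eq, ← hσeq _ hmem]
      exact Equiv.Perm.apply_mem_support.mpr hmem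
  obtain ⟨heq, hmem⟩ := key k le_rfl
  exact ⟨(σ1 ^ k) x, heq ▸ hmem, Equiv.Perm.pow_apply_mem_support.mpr hxA, hk2⟩

/-- If `σ₁, σ₂ ∈ S_d` are non-disjoint cycles and `σ` is any cycle in the
decomposition of `σ₁ σ₂` into disjoint cycles, then some element of `{1, …, d}` lies
in the support of `σ`, of `σ₁`, and of `σ₂`. -/
theorem exists_common_support_of_cycle_factor
    (d : ℕ) (σ1 σ2 : Equiv.Perm (Fin d))
    (h1 : σ1.IsCycle) (h2 : σ2.IsCycle)
    (hnd : ¬Disjoint σ1.support σ2.support)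
    (σ : Equiv.Perm (Fin d)) (hσ : σ ∈ (σ1 * σ2).cycleFactorsFinset) :
    ∃ x : Fin d, x ∈ σ.support ∧ x ∈ σ1.support ∧ x ∈ σ2.support := by
  obtain ⟨a, ha1, ha2⟩ := Finset.not_disjoint_iff.mp hnd
  obtain ⟨hσc, hσeq⟩ := Equiv.Perm.mem_cycleFactorsFinset_iff.mp hσ
  obtain ⟨x, hx⟩ := hσc.nonempty_support
  have hxf : x ∈ (σ1 * σ2).support := by
    rw [Equiv.Perm.mem_support, ← hσeq x hx]
    exact Equiv.Perm.mem_support.mp hx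
  have hxu : x ∈ σ1.support ∪ σ2.support := Equiv.Perm.support_mul_le σ1 σ2 hxf
  rcases Finset.mem_union.mp hxu with hxA | hxB
  · exact aux_common_support σ1 σ2 σ h1 hσ a ha1 ha2 x hx hxA
  · have hinv : σ⁻¹ ∈ (σ2⁻¹ * σ1⁻¹).cycleFactorsFinset := by
      rw [Equiv.Perm.mem_cycleFactorsFinset_iff]
      refine ⟨hσc.inv, fun y hy => ?_⟩
      have hy' : y ∈ σ.support := by rwa [Equiv.Perm.support_inv] at hy
      have hy2 : σ⁻¹ y ∈ σ.support := by
        rw [← Equiv.Perm.apply_mem_support (f := σ), (by simp : ∀ z, σ (σ⁻¹ z) = z)]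
        exact hy'
      have := hσeq _ hy2
      rw [(by simp : ∀ z, σ (σ⁻¹ z) = z)] at this
      have h3 : (σ1 * σ2)⁻¹ y = σ⁻¹ y := by
        rw [Equiv.Perm.inv_eq_iff_eq]
        exact this
      rw [← mul_inv_rev, h3]
    have hxB' : x ∈ σ2⁻¹.support := by rwa [Equiv.Perm.support_inv]
    have hx' : x ∈ σ⁻¹.support := by rwa [Equiv.Perm.support_inv]
    have ha2' : a ∈ σ2⁻¹.support := by rwa [Equiv.Perm.support_inv]
    have ha1' : a ∈ σ1⁻¹.support := by rwa [Equiv.Perm.support_inv]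
    obtain ⟨y, hy, hy2, hy1⟩ :=
      aux_common_support σ2⁻¹ σ1⁻¹ σ⁻¹ h2.inv hinv a ha2' ha1' x hx' hxB'
    rw [Equiv.Perm.support_inv] at hy hy2 hy1
    exact ⟨y, hy, hy1, hy2⟩
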